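/- Let P_f and P_b be positive definite real n×n matrices, and set K_f = P_b (P_f + P_b)⁻¹ and K_b = 1 − K_f. Then the fused covariance with the optimal gains satisfies K_f P_f K_fᵀ + K_b P_b K_bᵀ = (P_f⁻¹ + P_b⁻¹)⁻¹; i.e., the smoothed covariance is the inverse of the sum of the forward and backward information matrices. -/
import Mathlib


open Matrix

/-- With the optimal fusion gains, the fused covariance equals the inverse of the sum of
the forward and backward information matrices. -/
theorem tfs_optimal_fused_covariance
    {n : ℕ} (P_f P_b : Matrix (Fin n) (Fin n) ℝ)
    (hPf : P_f.PosDef) (hPb : P_b.PosDef)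
    (K_f K_b : Matrix (Fin n) (Fin n) ℝ)
    (hKf : K_f = P_b * (P_f + P_b)⁻¹) (hKb : K_b = 1 - K_f) :
    K_f * P_f * K_fᵀ + K_b * P_b * K_bᵀ = (P_f⁻¹ + P_b⁻¹)⁻¹ := by
  set S := P_f + P_b with hS
  have hSpd : S.PosDef := hPf.add hPb
  have hf : IsUnit P_f.det := isUnit_iff_ne_zero.2 (ne_of_gt hPf.det_pos)
  have hb : IsUnit P_b.det := isUnit_iff_ne_zero.2 (ne_of_gt hPb.det_pos)
  have hs : IsUnit S.det := isUnit_iff_ne_zero.2 (ne_of_gt hSpd.det_pos)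
  have hSsym : Sᵀ = S := by simpa using hSpd.isHermitian.eq
  have hft : P_fᵀ = P_f := by simpa using hPf.isHermitian.eq
  have hbt : P_bᵀ = P_b := by simpa using hPb.isHermitian.eq
  have hSinvT : S⁻¹ᵀ = S⁻¹ := by
    rw [transpose_nonsing_inv, hSsym]
  -- key: P_f⁻¹ + P_b⁻¹ = P_f⁻¹ * S * P_b⁻¹ and = P_b⁻¹ * S * P_f⁻¹
  have h1 : P_f⁻¹ + P_b⁻¹ = P_f⁻¹ * S * P_b⁻¹ := by
    rw [hS, mul_add, add_mul, Matrix.nonsing_inv_mul _ hf, Matrix.mul_assoc,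
      Matrix.mul_nonsing_inv _ hb, Matrix.one_mul, Matrix.mul_one, add_comm]
  have h2 : P_f⁻¹ + P_b⁻¹ = P_b⁻¹ * S * P_f⁻¹ := by
    rw [hS, mul_add, add_mul, Matrix.nonsing_inv_mul _ hb, Matrix.mul_assoc,
      Matrix.mul_nonsing_inv _ hf, Matrix.one_mul, Matrix.mul_one, add_comm]
  have hinv1 : (P_f⁻¹ + P_b⁻¹)⁻¹ = P_b * S⁻¹ * P_f := by
    rw [h1, Matrix.mul_inv_rev, Matrix.mul_inv_rev, Matrix.nonsing_inv_nonsing_inv _ hf,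
      Matrix.nonsing_inv_nonsing_inv _ hb, Matrix.mul_assoc]
  have hinv2 : (P_f⁻¹ + P_b⁻¹)⁻¹ = P_f * S⁻¹ * P_b := by
    rw [h2, Matrix.mul_inv_rev, Matrix.mul_inv_rev, Matrix.nonsing_inv_nonsing_inv _ hf,
      Matrix.nonsing_inv_nonsing_inv _ hb, Matrix.mul_assoc]
  have hswap : P_b * S⁻¹ * P_f = P_f * S⁻¹ * P_b := by rw [← hinv1, hinv2]
  have hKb' : K_b = P_f * S⁻¹ := by
    rw [hKb, hKf, ← Matrix.mul_nonsing_inv S hs, hS, add_mul]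
    abel
  rw [hKf, hKb']
  simp only [transpose_mul, hSinvT, hft, hbt]
  calc P_b * S⁻¹ * P_f * (S⁻¹ * P_b) + P_f * S⁻¹ * P_b * (S⁻¹ * P_f)
      = P_f * S⁻¹ * P_b * S⁻¹ * P_b + P_f * S⁻¹ * P_b * S⁻¹ * P_f := by
        rw [hswap]; noncomm_ring
    _ = P_f * S⁻¹ * P_b * S⁻¹ * (P_b + P_f) := by noncomm_ring
    _ = P_f * S⁻¹ * P_b * S⁻¹ * S := by rw [add_comm P_b P_f]
    _ = P_f * S⁻¹ * P_b := by
        rw [Matrix.mul_assoc, Matrix.mul_assoc, Matrix.mul_assoc,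
          Matrix.nonsing_inv_mul _ hs, Matrix.mul_one, ← Matrix.mul_assoc]
    _ = (P_f⁻¹ + P_b⁻¹)⁻¹ := hinv2.symm
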